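/- arXiv:1609.01061 — 4 statements merged into one kernel-verified Lean document; each statement's English description precedes it below -/
import Mathlib

section
/- Let A and A' be two n-dimensional algebras over a field K, let (f, g, h) be an isotopism from A to A', and let S be a vector subspace of A. Then f(Ann_{A^-}(S)) = Ann_{A'^-}(g(S)), i.e., the image under f of the left annihilator of S equals the left annihilator in A' of the image of S under g. -/
theorem stmt_0 {K A A' : Type*} [Field K]
    [AddCommGroup A] [Module K A] [AddCommGroup A'] [Module K A']
    (n : ℕ) (hA : Module.finrank K A = n) (hA' : Module.finrank K A' = n)
    (mul : A →ₗ[K] A →ₗ[K] A) (mul' : A' →ₗ[K] A' →ₗ[K] A')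
    (f g h : A ≃ₗ[K] A')
    (hiso : ∀ u v : A, mul' (f u) (g v) = h (mul u v))
    (S : Submodule K A) :
    ⇑f '' {u : A | ∀ v ∈ S, mul u v = 0} =
      {u : A' | ∀ v ∈ ⇑g '' (S : Set A), mul' u v = 0} := by
  ext u'
  constructor
  · rintro ⟨u, hu, rfl⟩ v' ⟨v, hv, rfl⟩
    rw [hiso, hu v hv, map_zero]
  · intro hu'
    refine ⟨f.symm u', fun v hv => ?_, f.apply_symm_apply u'⟩
    have := hu' (g v) ⟨v, hv, rfl⟩
    rw [show (u' : A') = f (f.symm u') from (f.apply_symm_apply u').symm, hiso] at this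
    exact h.injective (by simpa using this)
end

section
/- Let A and A' be two n-dimensional algebras over a field K, let (f, g, h) be an isotopism from A to A', and let S be a vector subspace of A. Then g(Ann_{A^+}(S)) = Ann_{A'^+}(f(S)), i.e., the image under g of the right annihilator of S equals the right annihilator in A' of the image of S under f. -/
theorem stmt_1 {K A A' : Type*} [Field K]
    [AddCommGroup A] [Module K A] [AddCommGroup A'] [Module K A']
    (n : ℕ) (hA : Module.finrank K A = n) (hA' : Module.finrank K A' = n)
    (mul : A →ₗ[K] A →ₗ[K] A) (mul' : A' →ₗ[K] A' →ₗ[K] A')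
    (f g h : A ≃ₗ[K] A')
    (hiso : ∀ u v : A, mul' (f u) (g v) = h (mul u v))
    (S : Submodule K A) :
    ⇑g '' {u : A | ∀ v ∈ S, mul v u = 0} =
      {u : A' | ∀ v ∈ ⇑f '' (S : Set A), mul' v u = 0} := by
  ext u'
  constructor
  · rintro ⟨u, hu, rfl⟩ v ⟨w, hw, rfl⟩
    rw [hiso, hu w hw, map_zero]
  · intro hu
    refine ⟨g.symm u', fun v hv => ?_, g.apply_symm_apply u'⟩
    have := hu (f v) ⟨v, hv, rfl⟩
    rw [show u' = g (g.symm u') from (g.apply_symm_apply u').symm, hiso] at this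
    exact h.injective (by simpa using this)
end

section
/- Let ([2], ·) be the partial magma whose only defined product is 1·1 = 1, and let ([2], ∘) be the partial magma whose defined products are exactly 1∘1 = 1 and 2∘1 = 1. Then ([2], ·) and ([2], ∘) are not isotopic as partial magmas, yet for every field K their partial magma rings A^· (with basis {e₁, e₂}) and A^∘ (with basis {e'₁, e'₂}) are isotopic: the triple (f, Id, Id), where f is the linear map with f(e₁) = e'₁ and f(e₂) = e'₂ − e'₁ and Id sends e_i to e'_i, is an isotopism from A^· to A^∘. -/
/-- The bilinear multiplication of the partial magma ring over `K` based on the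
partial magma `op` on `Fin n`: it satisfies `e_i * e_j = e_{i·j}` when `i·j` is
defined and `e_i * e_j = 0` otherwise. -/
def pmMul (K : Type*) [Field K] {n : ℕ} (op : Fin n → Fin n → Option (Fin n))
    (x y : Fin n → K) : Fin n → K :=
  fun k => ∑ i, ∑ j, if op i j = some k then x i * y j else 0

/-- The partial magma on `{1,2}` whose only defined product is `1·1 = 1`. -/
def opDot : Fin 2 → Fin 2 → Option (Fin 2) :=
  fun i j => if i = 0 ∧ j = 0 then some 0 else none

/-- The partial magma on `{1,2}` whose defined products are exactly `1∘1 = 1` and `2∘1 = 1`. -/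
def opCirc : Fin 2 → Fin 2 → Option (Fin 2) :=
  fun _ j => if j = 0 then some 0 else none

theorem stmt_6 (K : Type*) [Field K] :
    (¬ ∃ α β γ : Equiv.Perm (Fin 2),
        ∀ i j, opCirc (α i) (β j) = Option.map γ (opDot i j)) ∧
    (∃ f : (Fin 2 → K) ≃ₗ[K] (Fin 2 → K),
        f (Pi.single 0 1) = Pi.single 0 1 ∧
        f (Pi.single 1 1) = Pi.single 1 1 - Pi.single 0 1 ∧
        ∀ x y : Fin 2 → K, pmMul K opCirc (f x) y = pmMul K opDot x y) := by
  constructor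
  · rintro ⟨α, β, γ, h⟩
    have h10 := h 1 0
    have h00 := h 0 0
    simp [opDot, opCirc] at h10 h00
    exact h10 h00.1
  · refine ⟨{
      toFun := fun x => ![x 0 - x 1, x 1]
      invFun := fun x => ![x 0 + x 1, x 1]
      map_add' := by intro x y; funext k; fin_cases k <;> simp <;> ring
      map_smul' := by intro c x; funext k; fin_cases k <;> simp <;> ring
      left_inv := by intro x; funext k; fin_cases k <;> simp
      right_inv := by intro x; funext k; fin_cases k <;> simp }, ?_, ?_, ?_⟩
    · funext k; fin_cases k <;> simp [Pi.single_apply]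
    · funext k; fin_cases k <;> simp [Pi.single_apply]
    · intro x y
      funext k
      simp only [pmMul, Fin.sum_univ_two, opCirc, opDot, LinearEquiv.coe_mk]
      fin_cases k <;> simp <;> ring
end

section
/- Let A be a finite-dimensional algebra over a finite field K and let 𝟏_S denote the characteristic function of a set S. In the graph G₂(A): (i) for all u ∉ Ann_{A^-}(A), the degree of r_u equals |A ∖ Ann_{A^+}({u})| + 𝟏_{A ∖ Ann_{A^+}(A)}(u) + 𝟏_{A²}(u); (ii) for all u ∉ Ann_{A^+}(A), the degree of c_u equals |A ∖ Ann_{A^-}({u})| + 𝟏_{A ∖ Ann_{A^-}(A)}(u) + 𝟏_{A²}(u); (iii) for all u ∈ A² ∖ {0}, the degree of s_u equals 𝟏_{A ∖ Ann_{A^-}(A)}(u) + 𝟏_{A ∖ Ann_{A^+}(A)}(u) + Σ_{v ∈ A} |ad_v^{-1}(u)|, where ad_v : A → A is the map w ↦ vw. -/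
/-- Vertices of the graphs `G₁(A)` and `G₂(A)`: row vertices `r u`, column
vertices `c u`, symbol vertices `s u` and cell vertices `t u v`. -/
inductive Vert (A : Type*) : Type _
  | r : A → Vert A
  | c : A → Vert A
  | s : A → Vert A
  | t : A → A → Vert A

section Graphs

variable {A : Type*} [Zero A]

/-- The left annihilator `Ann_{A⁻}(A)` of the algebra with product `mul`. -/
def annL (mul : A → A → A) : Set A := {u | ∀ v, mul u v = 0}

/-- The right annihilator `Ann_{A⁺}(A)` of the algebra with product `mul`. -/
def annR (mul : A → A → A) : Set A := {u | ∀ v, mul v u = 0}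

/-- The derived set `A² = {uv : u, v ∈ A}` of the algebra with product `mul`. -/
def derived (mul : A → A → A) : Set A := {w | ∃ u v, mul u v = w}

/-- The vertex set of `G₁(A)` and `G₂(A)`:
`R_A = {r_u : u ∈ A ∖ Ann_{A⁻}(A)}`, `C_A = {c_u : u ∈ A ∖ Ann_{A⁺}(A)}`,
`S_A = {s_u : u ∈ A² ∖ {0}}`, `T_A = {t_{u,v} : u, v ∈ A, uv ≠ 0}`. -/
def IsVert (mul : A → A → A) : Vert A → Prop
  | .r u => u ∉ annL mul
  | .c u => u ∉ annR mul
  | .s u => u ∈ derived mul ∧ u ≠ 0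
  | .t u v => mul u v ≠ 0

/-- The adjacency relation of `G₁(A)`: edges `r_u t_{u,v}`, `c_v t_{u,v}` and
`s_{uv} t_{u,v}` for every `u, v ∈ A` with `uv ≠ 0`. -/
inductive G1Adj (mul : A → A → A) : Vert A → Vert A → Prop
  | rt (u v : A) : mul u v ≠ 0 → G1Adj mul (.r u) (.t u v)
  | tr (u v : A) : mul u v ≠ 0 → G1Adj mul (.t u v) (.r u)
  | ct (u v : A) : mul u v ≠ 0 → G1Adj mul (.c v) (.t u v)
  | tc (u v : A) : mul u v ≠ 0 → G1Adj mul (.t u v) (.c v)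
  | st (u v : A) : mul u v ≠ 0 → G1Adj mul (.s (mul u v)) (.t u v)
  | ts (u v : A) : mul u v ≠ 0 → G1Adj mul (.t u v) (.s (mul u v))

lemma G1Adj.ne {mul : A → A → A} {x y : Vert A} (h : G1Adj mul x y) : x ≠ y := by
  cases h <;> simp

/-- The graph `G₁(A)`, on the vertex set `R_A ∪ C_A ∪ S_A ∪ T_A`. -/
def G1 (mul : A → A → A) : SimpleGraph {x : Vert A // IsVert mul x} where
  Adj x y := G1Adj mul x.1 y.1
  symm := by constructor; rintro ⟨x, hx⟩ ⟨y, hy⟩ h; cases h <;> constructor <;> assumption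
  loopless := ⟨fun x h => h.ne rfl⟩

/-- The adjacency relation of `G₂(A)`: that of `G₁(A)` together with the extra
edges `r_u c_u` for `u ∈ A ∖ Ann_A(A)`, `c_u s_u` for `u ∈ A² ∖ Ann_{A⁺}(A)`
and `r_u s_u` for `u ∈ A² ∖ Ann_{A⁻}(A)`. -/
inductive G2Adj (mul : A → A → A) : Vert A → Vert A → Prop
  | g1 {x y : Vert A} : G1Adj mul x y → G2Adj mul x y
  | rc (u : A) : u ∉ annL mul ∩ annR mul → G2Adj mul (.r u) (.c u)
  | cr (u : A) : u ∉ annL mul ∩ annR mul → G2Adj mul (.c u) (.r u)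
  | cs (u : A) : u ∈ derived mul \ annR mul → G2Adj mul (.c u) (.s u)
  | sc (u : A) : u ∈ derived mul \ annR mul → G2Adj mul (.s u) (.c u)
  | rs (u : A) : u ∈ derived mul \ annL mul → G2Adj mul (.r u) (.s u)
  | sr (u : A) : u ∈ derived mul \ annL mul → G2Adj mul (.s u) (.r u)

lemma G2Adj.ne {mul : A → A → A} {x y : Vert A} (h : G2Adj mul x y) : x ≠ y := by
  cases h with
  | g1 h => exact h.ne
  | _ => simp

/-- The graph `G₂(A)`, on the vertex set `R_A ∪ C_A ∪ S_A ∪ T_A`. -/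
def G2 (mul : A → A → A) : SimpleGraph {x : Vert A // IsVert mul x} where
  Adj x y := G2Adj mul x.1 y.1
  symm := by
    constructor
    rintro ⟨x, hx⟩ ⟨y, hy⟩ h
    cases h with
    | g1 h => exact .g1 (by cases h <;> constructor <;> assumption)
    | rc u h => exact .cr u h
    | cr u h => exact .rc u h
    | cs u h => exact .sc u h
    | sc u h => exact .cs u h
    | rs u h => exact .sr u h
    | sr u h => exact .rs u h
  loopless := ⟨fun x h => h.ne rfl⟩

/-- The color of a vertex: row, column, symbol or cell. -/
def Vert.color : Vert A → Fin 4
  | .r _ => 0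
  | .c _ => 1
  | .s _ => 2
  | .t _ _ => 3

end Graphs

set_option linter.unusedSectionVars false

section AuxDeg
open scoped Classical

variable {A : Type*} [Zero A] [Finite A]

instance : Finite (Vert A) :=
  Finite.of_injective
    (fun x => match x with
      | .r a => Sum.inl (Sum.inl a)
      | .c a => Sum.inl (Sum.inr a)
      | .s a => Sum.inr (Sum.inl a)
      | .t a b => Sum.inr (Sum.inr (a, b)))
    (by rintro (a|a|a|⟨a,b⟩) (c|c|c|⟨c,d⟩) h <;> simp_all)

lemma vert_t_inj (u : A) : Function.Injective (Vert.t u : A → Vert A) := by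
  intro a b h
  simpa using h

lemma vert_t_uncurry_inj : Function.Injective (fun p : A × A => (Vert.t p.1 p.2 : Vert A)) := by
  rintro ⟨a, b⟩ ⟨c, d⟩ h
  simp only [Vert.t.injEq] at h
  simp [Prod.ext_iff, h]

lemma ncard_if_singleton (p : Prop) [Decidable p] (a : Vert A) :
    (if p then ({a} : Set (Vert A)) else ∅).ncard = if p then 1 else 0 := by
  split <;> simp

lemma disjoint_if_singleton {s : Set (Vert A)} (p : Prop) [Decidable p] {a : Vert A}
    (ha : a ∉ s) : Disjoint s (if p then {a} else ∅) := by
  split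
  · exact Set.disjoint_singleton_right.2 ha
  · simp

lemma degR (m : A → A → A) (h0 : ∀ v, m 0 v = 0) (u : A) (h : u ∉ annL m) :
    ((G2 m).neighborSet ⟨Vert.r u, h⟩).ncard =
      {w : A | m u w ≠ 0}.ncard + (if u ∉ annR m then 1 else 0) +
        (if u ∈ derived m then 1 else 0) := by
  have hu0 : u ≠ 0 := by rintro rfl; exact h fun v => h0 v
  have himg : Subtype.val '' ((G2 m).neighborSet ⟨Vert.r u, h⟩) =
      (Vert.t u '' {w | m u w ≠ 0}) ∪ (if u ∉ annR m then {Vert.c u} else ∅)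
        ∪ (if u ∈ derived m then {Vert.s u} else ∅) := by
    ext x
    constructor
    · rintro ⟨⟨y, hy⟩, hadj, rfl⟩
      cases hadj with
      | g1 h1 =>
        cases h1 with
        | rt u v hne => exact Or.inl (Or.inl ⟨v, hne, rfl⟩)
      | rc u' hre => exact Or.inl (Or.inr (by rw [if_pos (show _ ∉ annR m from hy)]; rfl))
      | rs u' hmem => exact Or.inr (by rw [if_pos hmem.1]; rfl)
    · rintro ((⟨v, hv, rfl⟩ | hx) | hx)
      · exact ⟨⟨Vert.t u v, hv⟩, G2Adj.g1 (G1Adj.rt u v hv), rfl⟩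
      · by_cases hr : u ∉ annR m
        · rw [if_pos hr] at hx
          rcases hx with rfl
          exact ⟨⟨Vert.c u, hr⟩, G2Adj.rc u fun hc => h hc.1, rfl⟩
        · rw [if_neg hr] at hx; exact absurd hx (Set.notMem_empty _)
      · by_cases hd : u ∈ derived m
        · rw [if_pos hd] at hx
          rcases hx with rfl
          exact ⟨⟨Vert.s u, ⟨hd, hu0⟩⟩, G2Adj.rs u ⟨hd, h⟩, rfl⟩
        · rw [if_neg hd] at hx; exact absurd hx (Set.notMem_empty _)
  have hc_not : (Vert.c u : Vert A) ∉ Vert.t u '' {w | m u w ≠ 0} := by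
    rintro ⟨v, -, hv⟩; exact absurd hv (by simp)
  have hs_not : (Vert.s u : Vert A) ∉
      (Vert.t u '' {w | m u w ≠ 0}) ∪ (if u ∉ annR m then {Vert.c u} else ∅) := by
    rintro (⟨v, -, hv⟩ | hx)
    · exact absurd hv (by simp)
    · revert hx; split <;> simp
  rw [← Set.ncard_image_of_injective _ Subtype.val_injective, himg,
    Set.ncard_union_eq (disjoint_if_singleton _ hs_not),
    Set.ncard_union_eq (disjoint_if_singleton _ hc_not),
    Set.ncard_image_of_injective _ (vert_t_inj u),
    ncard_if_singleton, ncard_if_singleton]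

lemma degC (m : A → A → A) (h0 : ∀ v, m v 0 = 0) (u : A) (h : u ∉ annR m) :
    ((G2 m).neighborSet ⟨Vert.c u, h⟩).ncard =
      {w : A | m w u ≠ 0}.ncard + (if u ∉ annL m then 1 else 0) +
        (if u ∈ derived m then 1 else 0) := by
  have hu0 : u ≠ 0 := by rintro rfl; exact h fun v => h0 v
  have himg : Subtype.val '' ((G2 m).neighborSet ⟨Vert.c u, h⟩) =
      ((fun w => Vert.t w u) '' {w | m w u ≠ 0}) ∪ (if u ∉ annL m then {Vert.r u} else ∅)
        ∪ (if u ∈ derived m then {Vert.s u} else ∅) := by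
    ext x
    constructor
    · rintro ⟨⟨y, hy⟩, hadj, rfl⟩
      cases hadj with
      | g1 h1 =>
        cases h1 with
        | ct v u' hne => exact Or.inl (Or.inl ⟨v, hne, rfl⟩)
      | cr u' hre => exact Or.inl (Or.inr (by rw [if_pos (show _ ∉ annL m from hy)]; rfl))
      | cs u' hmem => exact Or.inr (by rw [if_pos hmem.1]; rfl)
    · rintro ((⟨v, hv, rfl⟩ | hx) | hx)
      · exact ⟨⟨Vert.t v u, hv⟩, G2Adj.g1 (G1Adj.ct v u hv), rfl⟩
      · by_cases hr : u ∉ annL m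
        · rw [if_pos hr] at hx
          rcases hx with rfl
          exact ⟨⟨Vert.r u, hr⟩, G2Adj.cr u fun hc => h hc.2, rfl⟩
        · rw [if_neg hr] at hx; exact absurd hx (Set.notMem_empty _)
      · by_cases hd : u ∈ derived m
        · rw [if_pos hd] at hx
          rcases hx with rfl
          exact ⟨⟨Vert.s u, ⟨hd, hu0⟩⟩, G2Adj.cs u ⟨hd, h⟩, rfl⟩
        · rw [if_neg hd] at hx; exact absurd hx (Set.notMem_empty _)
  have hinj : Function.Injective (fun w : A => (Vert.t w u : Vert A)) := by
    intro a b hab; simpa using hab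
  have hc_not : (Vert.r u : Vert A) ∉ (fun w => Vert.t w u) '' {w | m w u ≠ 0} := by
    rintro ⟨v, -, hv⟩; exact absurd hv (by simp)
  have hs_not : (Vert.s u : Vert A) ∉
      ((fun w => Vert.t w u) '' {w | m w u ≠ 0}) ∪ (if u ∉ annL m then {Vert.r u} else ∅) := by
    rintro (⟨v, -, hv⟩ | hx)
    · exact absurd hv (by simp)
    · revert hx; split <;> simp
  rw [← Set.ncard_image_of_injective _ Subtype.val_injective, himg,
    Set.ncard_union_eq (disjoint_if_singleton _ hs_not),
    Set.ncard_union_eq (disjoint_if_singleton _ hc_not),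
    Set.ncard_image_of_injective _ hinj,
    ncard_if_singleton, ncard_if_singleton]

lemma degS (m : A → A → A) (u : A) (h : u ∈ derived m ∧ u ≠ 0) :
    ((G2 m).neighborSet ⟨Vert.s u, h⟩).ncard =
      (if u ∉ annL m then 1 else 0) + (if u ∉ annR m then 1 else 0) +
        {p : A × A | m p.1 p.2 = u}.ncard := by
  have himg : Subtype.val '' ((G2 m).neighborSet ⟨Vert.s u, h⟩) =
      ((if u ∉ annL m then {Vert.r u} else ∅) ∪ (if u ∉ annR m then {Vert.c u} else ∅))
        ∪ ((fun p : A × A => Vert.t p.1 p.2) '' {p | m p.1 p.2 = u}) := by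
    ext x
    constructor
    · rintro ⟨⟨y, hy⟩, hadj, rfl⟩
      cases hadj with
      | g1 h1 =>
        cases h1 with
        | st a b hne => exact Or.inr ⟨(a, b), rfl, rfl⟩
      | sr u' hmem => exact Or.inl (Or.inl (by rw [if_pos hmem.2]; rfl))
      | sc u' hmem => exact Or.inl (Or.inr (by rw [if_pos hmem.2]; rfl))
    · rintro ((hx | hx) | ⟨⟨a, b⟩, hab, rfl⟩)
      · by_cases hr : u ∉ annL m
        · rw [if_pos hr] at hx
          rcases hx with rfl
          exact ⟨⟨Vert.r u, hr⟩, G2Adj.sr u ⟨h.1, hr⟩, rfl⟩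
        · rw [if_neg hr] at hx; exact absurd hx (Set.notMem_empty _)
      · by_cases hr : u ∉ annR m
        · rw [if_pos hr] at hx
          rcases hx with rfl
          exact ⟨⟨Vert.c u, hr⟩, G2Adj.sc u ⟨h.1, hr⟩, rfl⟩
        · rw [if_neg hr] at hx; exact absurd hx (Set.notMem_empty _)
      · have hne : m a b ≠ 0 := hab ▸ h.2
        refine ⟨⟨Vert.t a b, hne⟩, ?_, rfl⟩
        have := G2Adj.g1 (mul := m) (G1Adj.st a b hne)
        rwa [hab] at this
  have hr_not : (Vert.r u : Vert A) ∉ (fun p : A × A => Vert.t p.1 p.2) '' {p | m p.1 p.2 = u} := by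
    rintro ⟨⟨p, q⟩, -, hp⟩; exact absurd hp (by simp)
  have hc_not : (Vert.c u : Vert A) ∉ (fun p : A × A => Vert.t p.1 p.2) '' {p | m p.1 p.2 = u} := by
    rintro ⟨⟨p, q⟩, -, hp⟩; exact absurd hp (by simp)
  have h12 : Disjoint (if u ∉ annL m then ({Vert.r u} : Set (Vert A)) else ∅)
      (if u ∉ annR m then ({Vert.c u} : Set (Vert A)) else ∅) :=
    disjoint_if_singleton _ (by split <;> simp)
  rw [← Set.ncard_image_of_injective _ Subtype.val_injective, himg,
    Set.ncard_union_eq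
      (Disjoint.union_left (disjoint_if_singleton _ hr_not).symm
        (disjoint_if_singleton _ hc_not).symm),
    Set.ncard_union_eq h12, ncard_if_singleton, ncard_if_singleton,
    Set.ncard_image_of_injective _ vert_t_uncurry_inj]

end AuxDeg

open scoped Classical in
theorem stmt_13 {K A : Type*} [Field K] [Finite K]
    [AddCommGroup A] [Module K A] [Module.Finite K A]
    (mul : A →ₗ[K] A →ₗ[K] A) :
    (∀ (u : A) (h : u ∉ annL fun a b : A => mul a b),
        ((G2 fun a b : A => mul a b).neighborSet ⟨Vert.r u, h⟩).ncard =
          {w : A | mul u w ≠ 0}.ncard +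
            (if u ∉ annR fun a b : A => mul a b then 1 else 0) +
            (if u ∈ derived fun a b : A => mul a b then 1 else 0)) ∧
    (∀ (u : A) (h : u ∉ annR fun a b : A => mul a b),
        ((G2 fun a b : A => mul a b).neighborSet ⟨Vert.c u, h⟩).ncard =
          {w : A | mul w u ≠ 0}.ncard +
            (if u ∉ annL fun a b : A => mul a b then 1 else 0) +
            (if u ∈ derived fun a b : A => mul a b then 1 else 0)) ∧
    (∀ (u : A) (h : u ∈ (derived fun a b : A => mul a b) ∧ u ≠ 0),
        ((G2 fun a b : A => mul a b).neighborSet ⟨Vert.s u, h⟩).ncard =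
          (if u ∉ annL fun a b : A => mul a b then 1 else 0) +
            (if u ∉ annR fun a b : A => mul a b then 1 else 0) +
            {p : A × A | mul p.1 p.2 = u}.ncard) := by
  have : Finite A := Module.finite_of_finite K
  refine ⟨fun u h => degR _ (fun v => by simp) u h,
          fun u h => degC _ (fun v => by simp) u h,
          fun u h => degS _ u h⟩
end
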